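/- Exact recovery in the 2-WSBM with parameters (μ̂ log N, σ̂ √(log N / 2), N, k) with k = o(log N) is achievable whenever γ = μ̂/σ̂ > 2√(1/(k−1)): the densest-k-subgraph estimator equals the planted community with probability 1 − o(1). -/

import Mathlib

open Real Filter Finset MeasureTheory ProbabilityTheory

open scoped NNReal ENNReal

/-- pointwise completion of the square -/
lemma gauss_complete_square (m : ℝ) (v : ℝ≥0) (hv : v ≠ 0) (s x : ℝ) :
    rexp (s * x) * gaussianPDFReal m v x
      = rexp (m * s + v * s ^ 2 / 2) * gaussianPDFReal (m + v * s) v x := by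
  have hv0 : (0 : ℝ) < v := by positivity
  simp only [gaussianPDFReal]
  rw [mul_left_comm, mul_left_comm (rexp _), ← Real.exp_add, ← Real.exp_add]
  congr 2
  field_simp
  ring

lemma integrable_exp_mul_gaussianReal (m : ℝ) (v : ℝ≥0) (s : ℝ) :
    Integrable (fun x => rexp (s * x)) (gaussianReal m v) := by
  by_cases hv : v = 0
  · subst hv
    rw [gaussianReal_zero_var]
    refine ⟨((measurable_const_mul s).exp.stronglyMeasurable : StronglyMeasurable fun x : ℝ => rexp (s * x)).aestronglyMeasurable, ?_⟩
    rw [HasFiniteIntegral, lintegral_dirac' _ ((measurable_const_mul s).exp.enorm)]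
    exact ENNReal.coe_lt_top
  · rw [gaussianReal_of_var_ne_zero _ hv]
    have hpdf : gaussianPDF m v = fun x => ((Real.toNNReal (gaussianPDFReal m v x) : ℝ≥0) : ℝ≥0∞) := rfl
    rw [hpdf, integrable_withDensity_iff_integrable_smul
        ((measurable_gaussianPDFReal m v).real_toNNReal)]
    have : (fun x => (Real.toNNReal (gaussianPDFReal m v x) : ℝ≥0) • rexp (s * x))
        = fun x => rexp (m * s + v * s ^ 2 / 2) * gaussianPDFReal (m + v * s) v x := by
      ext x
      rw [NNReal.smul_def, smul_eq_mul, Real.coe_toNNReal _ (gaussianPDFReal_nonneg _ _ _),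
        mul_comm, gauss_complete_square m v hv]
    rw [this]
    exact (integrable_gaussianPDFReal _ _).const_mul _

lemma integral_exp_mul_gaussianReal (m : ℝ) (v : ℝ≥0) (s : ℝ) :
    ∫ x, rexp (s * x) ∂(gaussianReal m v) = rexp (m * s + v * s ^ 2 / 2) := by
  by_cases hv : v = 0
  · subst hv
    rw [gaussianReal_zero_var, integral_dirac' _ _ ((measurable_const_mul s).exp.stronglyMeasurable : StronglyMeasurable fun x : ℝ => rexp (s * x))]
    simp [mul_comm]
  · rw [gaussianReal_of_var_ne_zero _ hv]
    have hpdf : gaussianPDF m v = fun x => ((Real.toNNReal (gaussianPDFReal m v x) : ℝ≥0) : ℝ≥0∞) := rfl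
    rw [hpdf, integral_withDensity_eq_integral_smul
        ((measurable_gaussianPDFReal m v).real_toNNReal)]
    have : (fun x => (Real.toNNReal (gaussianPDFReal m v x) : ℝ≥0) • rexp (s * x))
        = fun x => rexp (m * s + v * s ^ 2 / 2) * gaussianPDFReal (m + v * s) v x := by
      ext x
      rw [NNReal.smul_def, smul_eq_mul, Real.coe_toNNReal _ (gaussianPDFReal_nonneg _ _ _),
        mul_comm, gauss_complete_square m v hv]
    rw [this, integral_const_mul, integral_gaussianPDFReal_eq_one _ hv, mul_one]



lemma map_eval_pi' {ι : Type*} [Fintype ι] {α : ι → Type*} [∀ i, MeasurableSpace (α i)]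
    (μ : ∀ i, Measure (α i)) [∀ i, IsProbabilityMeasure (μ i)] (i : ι) :
    (Measure.pi μ).map (fun ω => ω i) = μ i := by
  classical
  ext s hs
  rw [Measure.map_apply (measurable_pi_apply i) hs]
  have : (fun ω : ∀ j, α j => ω i) ⁻¹' s
      = Set.pi Set.univ (Function.update (fun j => (Set.univ : Set (α j))) i s) := by
    ext ω
    simp only [Set.mem_preimage, Set.mem_pi, Set.mem_univ, true_implies]
    constructor
    · intro h j
      rcases eq_or_ne j i with rfl | hj
      · simpa using h
      · simp [Function.update_of_ne hj]
    · intro h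
      simpa using h i
  rw [this, Measure.pi_pi, Finset.prod_eq_single i]
  · simp
  · intro j _ hj
    simp [Function.update_of_ne hj]
  · simp

lemma iIndepFun_eval' {ι : Type*} [Fintype ι] {α : ι → Type*} [∀ i, MeasurableSpace (α i)]
    (μ : ∀ i, Measure (α i)) [∀ i, IsProbabilityMeasure (μ i)] :
    iIndepFun (fun i (ω : ∀ j, α j) => ω i) (Measure.pi μ) := by
  classical
  rw [iIndepFun_iff_measure_inter_preimage_eq_mul]
  intro s sets h_meas
  have hset : (⋂ i ∈ s, (fun ω : ∀ j, α j => ω i) ⁻¹' sets i)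
      = Set.pi Set.univ (fun i => if i ∈ s then sets i else Set.univ) := by
    ext ω
    simp only [Set.mem_iInter, Set.mem_preimage, Set.mem_pi, Set.mem_univ, true_implies]
    constructor
    · intro h i
      by_cases hi : i ∈ s <;> simp [hi, h i]
    · intro h i hi
      simpa [hi] using h i
  rw [hset, Measure.pi_pi]
  have : ∀ i, μ i (if i ∈ s then sets i else Set.univ) = if i ∈ s then μ i (sets i) else 1 := by
    intro i; split_ifs <;> simp
  rw [Finset.prod_congr rfl fun i _ => this i, Finset.prod_ite_mem, Finset.univ_inter]
  refine Finset.prod_congr rfl fun i hi => ?_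
  rw [← map_eval_pi' μ i, Measure.map_apply (measurable_pi_apply i) (h_meas i hi)]

lemma chernoff_pi_gauss {ι : Type*} [Fintype ι] (μi : ι → ℝ) (v : ℝ≥0) (c : ι → ℝ)
    {t : ℝ} (ht : 0 ≤ t) :
    ((Measure.pi fun i => gaussianReal (μi i) v) {ω | 0 ≤ ∑ i, c i * ω i}).toReal
      ≤ rexp (t * (∑ i, c i * μi i) + (∑ i, (c i) ^ 2) * v * t ^ 2 / 2) := by
  classical
  set P := Measure.pi fun i => gaussianReal (μi i) v with hP
  have : IsProbabilityMeasure P := by rw [hP]; infer_instance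
  set X : ι → (ι → ℝ) → ℝ := fun i ω => c i * ω i with hXdef
  have hXm : ∀ i, Measurable (X i) := fun i => (measurable_pi_apply i).const_mul _
  have hind : iIndepFun X P := by
    have h0 : iIndepFun (fun i (ω : ι → ℝ) => ω i) P :=
      iIndepFun_eval' _
    exact h0.comp (fun i x => c i * x) fun i => measurable_const_mul _
  have hmap : ∀ i, P.map (fun ω => ω i) = gaussianReal (μi i) v := fun i => map_eval_pi' _ i
  have hint : ∀ i, Integrable (fun ω => rexp (t * X i ω)) P := by
    intro i
    have h1 : Integrable (fun x => rexp ((t * c i) * x)) (P.map (fun ω => ω i)) := by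
      rw [hmap i]; exact integrable_exp_mul_gaussianReal _ _ _
    have h2 := (integrable_map_measure
        ((measurable_const_mul (t * c i)).exp.stronglyMeasurable :
          StronglyMeasurable fun x : ℝ => rexp ((t * c i) * x)).aestronglyMeasurable
        (measurable_pi_apply i).aemeasurable).mp h1
    simpa [Function.comp_def, hXdef, mul_assoc] using h2
  have hmgf : ∀ i, mgf (X i) P t = rexp ((c i * μi i) * t + (c i) ^ 2 * v * t ^ 2 / 2) := by
    intro i
    have h1 : mgf (X i) P t = ∫ x, rexp ((t * c i) * x) ∂(P.map (fun ω => ω i)) := by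
      rw [integral_map (measurable_pi_apply i).aemeasurable
        ((measurable_const_mul (t * c i)).exp.stronglyMeasurable :
          StronglyMeasurable fun x : ℝ => rexp ((t * c i) * x)).aestronglyMeasurable]
      simp only [mgf, hXdef]
      congr 1; ext ω; ring_nf
    rw [h1, hmap i, integral_exp_mul_gaussianReal]
    congr 1
    push_cast
    ring
  have hsint : Integrable (fun ω => rexp (t * (∑ i, X i) ω)) P :=
    hind.integrable_exp_mul_sum hXm fun i _ => hint i
  have hchern := measure_ge_le_exp_mul_mgf (X := ∑ i, X i) (μ := P) 0 ht hsint
  have hset : {ω : ι → ℝ | 0 ≤ ∑ i, c i * ω i} = {ω | 0 ≤ (∑ i, X i) ω} := by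
    ext ω; simp [hXdef, Finset.sum_apply]
  rw [hset]
  refine hchern.trans ?_
  rw [hind.mgf_sum hXm]
  have hprod : ∏ i, mgf (X i) P t
      = rexp (∑ i, ((c i * μi i) * t + (c i) ^ 2 * v * t ^ 2 / 2)) := by
    rw [Real.exp_sum]
    exact Finset.prod_congr rfl fun i _ => hmgf i
  rw [hprod]
  have h2 : ∀ i : ι, (c i * μi i) * t + (c i) ^ 2 * ↑v * t ^ 2 / 2
      = t * (c i * μi i) + (c i) ^ 2 * (↑v * t ^ 2 / 2) := fun i => by ring
  simp_rw [h2]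
  rw [Finset.sum_add_distrib, ← Finset.mul_sum, ← Finset.sum_mul]
  rw [neg_mul, mul_zero, neg_zero, Real.exp_zero, one_mul]
  apply le_of_eq
  congr 1
  ring


/-- Weight of a node set `A` in an `h`-uniform hypergraph: sum of the weights of
all hyperedges (`h`-subsets) inside `A`. -/
noncomputable def Whyp (h : ℕ) {N : ℕ} (E : Finset (Fin N) → ℝ) (A : Finset (Fin N)) : ℝ :=
  ∑ e ∈ A.powersetCard h, E e

/-- Probability, in the 2-community WSBM on the complete `h`-uniform hypergraph on `N`
nodes with planted community `S` and parameters `(μ̂ log N, σ̂ √(log N/2))`, that the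
planted community is the unique densest `|S|`-sub-hypergraph (success of the ML
estimator). -/
noncomputable def hwsbmSuccess (μHat σHat : ℝ) (h : ℕ) {N : ℕ} (S : Finset (Fin N)) : ℝ :=
  ((Measure.pi fun e : Finset (Fin N) =>
      ProbabilityTheory.gaussianReal (if e.card = h ∧ e ⊆ S then μHat * Real.log N else 0)
        (Real.toNNReal (σHat ^ 2 * Real.log N / 2)))
    {E : Finset (Fin N) → ℝ | ∀ S' : Finset (Fin N),
      S'.card = S.card → S' ≠ S → Whyp h E S' < Whyp h E S}).toReal

lemma count_bound {N : ℕ} (S : Finset (Fin N)) :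
    ∑ S' ∈ (Finset.univ.powersetCard S.card).erase S, (((N : ℝ) ^ ((S' \ S).card))⁻¹)
      ≤ 2 ^ S.card := by
  classical
  set bad := (Finset.univ.powersetCard S.card).erase S with hbad
  have hmap : ∀ S' ∈ bad, S' ∩ S ∈ S.powerset := fun S' _ =>
    Finset.mem_powerset.2 Finset.inter_subset_right
  rw [← Finset.sum_fiberwise_of_maps_to hmap]
  have hinner : ∀ A ∈ S.powerset,
      (∑ S' ∈ bad.filter fun S' => S' ∩ S = A, (((N : ℝ) ^ ((S' \ S).card))⁻¹)) ≤ 1 := by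
    intro A hA
    have hfix : ∀ S' ∈ bad.filter fun S' => S' ∩ S = A,
        (S' \ S).card = S.card - A.card := by
      intro S' hS'
      simp only [Finset.mem_filter, hbad, Finset.mem_erase, Finset.mem_powersetCard] at hS'
      obtain ⟨⟨hne, -, hcard⟩, hAeq⟩ := hS'
      have h1 := Finset.card_inter_add_card_sdiff S' S
      have h2 : (S' ∩ S).card = A.card := by rw [hAeq]
      omega
    have hcardfib : (bad.filter fun S' => S' ∩ S = A).card ≤ N ^ (S.card - A.card) := by
      have hstep : (bad.filter fun S' => S' ∩ S = A).card
          ≤ (Finset.univ.powersetCard (S.card - A.card) : Finset (Finset (Fin N))).card := by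
        refine Finset.card_le_card_of_injOn (fun S' => S' \ S) ?_ ?_
        · intro S' hS'
          exact Finset.mem_powersetCard.2 ⟨Finset.subset_univ _, hfix S' hS'⟩
        · intro S1 h1 S2 h2 heq
          simp only [Finset.coe_filter, Set.mem_setOf_eq] at h1 h2
          have e1 : S1 ∩ S = A := h1.2
          have e2 : S2 ∩ S = A := h2.2
          calc S1 = S1 \ S ∪ S1 ∩ S := (Finset.sdiff_union_inter S1 S).symm
            _ = S2 \ S ∪ S2 ∩ S := by simp only at heq; rw [heq, e1, e2]
            _ = S2 := Finset.sdiff_union_inter S2 S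
      refine hstep.trans ?_
      rw [Finset.card_powersetCard, Finset.card_univ, Fintype.card_fin]
      exact Nat.choose_le_pow _ _
    calc (∑ S' ∈ bad.filter fun S' => S' ∩ S = A, (((N : ℝ) ^ ((S' \ S).card))⁻¹))
        = ∑ S' ∈ bad.filter fun S' => S' ∩ S = A, (((N : ℝ) ^ (S.card - A.card))⁻¹) :=
          Finset.sum_congr rfl fun S' hS' => by rw [hfix S' hS']
      _ = ((bad.filter fun S' => S' ∩ S = A).card : ℝ) * ((N : ℝ) ^ (S.card - A.card))⁻¹ := by
          rw [Finset.sum_const, nsmul_eq_mul]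
      _ ≤ 1 := by
          rcases Nat.eq_zero_or_pos N with rfl | hN
          · have : bad.filter (fun S' => S' ∩ S = A) ⊆ bad := Finset.filter_subset _ _
            by_cases hz : (S.card - A.card) = 0
            · rw [hz]
              simp only [pow_zero, inv_one, mul_one]
              -- card ≤ N^0 = 1
              have := hcardfib
              rw [hz, pow_zero] at this
              exact_mod_cast this
            · simp [hz]
          · rw [← div_eq_mul_inv, div_le_one (by positivity)]
            exact_mod_cast hcardfib
  calc (∑ A ∈ S.powerset, ∑ S' ∈ bad.filter fun S' => S' ∩ S = A,
          (((N : ℝ) ^ ((S' \ S).card))⁻¹))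
      ≤ ∑ A ∈ S.powerset, (1 : ℝ) := Finset.sum_le_sum hinner
    _ = 2 ^ S.card := by rw [Finset.sum_const, Finset.card_powerset, nsmul_eq_mul, mul_one]; push_cast; ring
      

set_option maxHeartbeats 1600000 in
lemma hwsbm_main {N : ℕ} (μHat σHat : ℝ) (hμ : 0 < μHat) (hσ : 0 < σHat) (hN : 2 ≤ N)
    (S : Finset (Fin N)) (hS2 : 2 ≤ S.card) {ε : ℝ} (hε : 0 < ε)
    (hγε : 4 / ((S.card : ℝ) - 1) + ε ≤ (μHat / σHat) ^ 2) :
    1 - 2 ^ S.card * rexp (-(ε / 2) * Real.log N) ≤ hwsbmSuccess μHat σHat 2 S := by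
  classical
  have hσ0 : σHat ≠ 0 := ne_of_gt hσ
  have hlogpos : (0 : ℝ) < Real.log N := Real.log_pos (by exact_mod_cast (by omega : 1 < N))
  set mean : Finset (Fin N) → ℝ :=
    fun e => if e.card = 2 ∧ e ⊆ S then μHat * Real.log N else 0 with hmean
  set v : ℝ≥0 := Real.toNNReal (σHat ^ 2 * Real.log N / 2) with hvdef
  have hv : (v : ℝ) = σHat ^ 2 * Real.log N / 2 := Real.coe_toNNReal _ (by positivity)
  set P := Measure.pi fun e : Finset (Fin N) => gaussianReal (mean e) v with hPdef
  have hprob : IsProbabilityMeasure P := by rw [hPdef]; infer_instance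
  set G : Set (Finset (Fin N) → ℝ) := {E | ∀ S' : Finset (Fin N),
      S'.card = S.card → S' ≠ S → Whyp 2 E S' < Whyp 2 E S} with hGdef
  have hsucc : hwsbmSuccess μHat σHat 2 S = (P G).toReal := rfl
  have hW : ∀ T : Finset (Fin N), Measurable fun E : Finset (Fin N) → ℝ => Whyp 2 E T :=
    fun T => Finset.measurable_sum _ fun e _ => measurable_pi_apply e
  have hGmeas : MeasurableSet G := by
    have hGi : G = ⋂ S' : Finset (Fin N),
        {E | S'.card = S.card → S' ≠ S → Whyp 2 E S' < Whyp 2 E S} := by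
      ext E; simp only [hGdef, Set.mem_setOf_eq, Set.mem_iInter]
    rw [hGi]
    refine MeasurableSet.iInter fun S' => ?_
    by_cases h1 : S'.card = S.card ∧ S' ≠ S
    · have heq : {E : Finset (Fin N) → ℝ | S'.card = S.card → S' ≠ S → Whyp 2 E S' < Whyp 2 E S}
          = {E | Whyp 2 E S' < Whyp 2 E S} := by ext E; simp [h1.1, h1.2]
      rw [heq]; exact measurableSet_lt (hW S') (hW S)
    · have heq : {E : Finset (Fin N) → ℝ | S'.card = S.card → S' ≠ S → Whyp 2 E S' < Whyp 2 E S}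
          = Set.univ := by
        ext E
        simp only [Set.mem_setOf_eq, Set.mem_univ, iff_true]
        intro hc hn; exact absurd ⟨hc, hn⟩ h1
      rw [heq]; exact MeasurableSet.univ
  set bad := (Finset.univ.powersetCard S.card).erase S with hbaddef
  set cc : Finset (Fin N) → Finset (Fin N) → ℝ := fun S' e =>
    (if e ∈ S'.powersetCard 2 then (1 : ℝ) else 0)
      - (if e ∈ S.powersetCard 2 then (1 : ℝ) else 0) with hccdef
  set B : Finset (Fin N) → Set (Finset (Fin N) → ℝ) :=
    fun S' => {E | 0 ≤ ∑ e, cc S' e * E e} with hBdef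
  have hdiff : ∀ S' (E : Finset (Fin N) → ℝ),
      ∑ e, cc S' e * E e = Whyp 2 E S' - Whyp 2 E S := by
    intro S' E
    simp only [hccdef, sub_mul, one_mul, zero_mul, ite_mul]
    rw [Finset.sum_sub_distrib,
      Finset.sum_ite_mem Finset.univ (S'.powersetCard 2) (fun e => E e),
      Finset.sum_ite_mem Finset.univ (S.powersetCard 2) (fun e => E e),
      Finset.univ_inter, Finset.univ_inter]
    rfl
  have hGc : Gᶜ ⊆ ⋃ S' ∈ bad, B S' := by
    intro E hE
    simp only [hGdef, Set.mem_compl_iff, Set.mem_setOf_eq] at hE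
    push_neg at hE
    obtain ⟨S', h1, h2, h3⟩ := hE
    refine Set.mem_biUnion
      (Finset.mem_erase.2 ⟨h2, Finset.mem_powersetCard.2 ⟨Finset.subset_univ _, h1⟩⟩) ?_
    show (0 : ℝ) ≤ ∑ e, cc S' e * E e
    rw [hdiff]
    linarith
  have hBmeas : ∀ S', MeasurableSet (B S') := fun S' =>
    measurableSet_le measurable_const
      (Finset.measurable_sum _ fun e _ => (measurable_pi_apply e).const_mul _)
  have hmean2 : ∀ e, mean e = if e ∈ S.powersetCard 2 then μHat * Real.log N else 0 :=
    fun e => if_congr ⟨fun h => Finset.mem_powersetCard.2 ⟨h.2, h.1⟩,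
      fun h => ⟨(Finset.mem_powersetCard.1 h).2, (Finset.mem_powersetCard.1 h).1⟩⟩ rfl rfl
  have hkey : ∀ S' ∈ bad, (P (B S')).toReal
      ≤ rexp (-(ε / 2) * Real.log N) * ((N : ℝ) ^ ((S' \ S).card))⁻¹ := by
    intro S' hS'
    have hS'mem := Finset.mem_erase.1 hS'
    have hS'ne : S' ≠ S := hS'mem.1
    have hS'card : S'.card = S.card := (Finset.mem_powersetCard.1 hS'mem.2).2
    set m := (S' ∩ S).card with hm
    set j := (S' \ S).card with hj
    have hmj : m + j = S.card := by
      rw [hm, hj, Finset.card_inter_add_card_sdiff, hS'card]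
    have hj1 : 1 ≤ j := by
      rcases Nat.eq_zero_or_pos j with h0 | h
      · exfalso
        have hsub : S' ⊆ S := Finset.sdiff_eq_empty_iff_subset.1 (Finset.card_eq_zero.1 h0)
        exact hS'ne (Finset.eq_of_subset_of_card_le hsub (le_of_eq hS'card.symm))
      · exact h
    have hPP : S'.powersetCard 2 ∩ S.powersetCard 2 = (S' ∩ S).powersetCard 2 := by
      ext e
      simp only [Finset.mem_inter, Finset.mem_powersetCard, Finset.subset_inter_iff]
      tauto
    set t : ℝ := μHat / σHat ^ 2 with ht
    have ht0 : 0 ≤ t := by positivity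
    have hch := chernoff_pi_gauss mean v (cc S') ht0
    rw [← hPdef] at hch
    have hsum1 : ∑ e, cc S' e * mean e
        = ((m.choose 2 : ℝ) - (S.card.choose 2 : ℝ)) * (μHat * Real.log N) := by
      have hpt : ∀ e, cc S' e * mean e
          = (if e ∈ (S' ∩ S).powersetCard 2 then μHat * Real.log N else 0)
            - (if e ∈ S.powersetCard 2 then μHat * Real.log N else 0) := by
        intro e
        rw [hmean2 e, ← hPP]
        have hcc : cc S' e = (if e ∈ S'.powersetCard 2 then (1 : ℝ) else 0)
            - (if e ∈ S.powersetCard 2 then (1 : ℝ) else 0) := rfl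
        rw [hcc]
        by_cases h1 : e ∈ S'.powersetCard 2 <;> by_cases h2 : e ∈ S.powersetCard 2
        · simp only [if_pos h1, if_pos h2, if_pos (Finset.mem_inter.2 ⟨h1, h2⟩)]; ring
        · simp only [if_pos h1, if_neg h2,
            if_neg (fun hc => h2 (Finset.mem_inter.1 hc).2)]; ring
        · simp only [if_neg h1, if_pos h2,
            if_neg (fun hc => h1 (Finset.mem_inter.1 hc).1)]; ring
        · simp only [if_neg h1, if_neg h2,
            if_neg (fun hc => h1 (Finset.mem_inter.1 hc).1)]; ring
      simp_rw [hpt]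
      rw [Finset.sum_sub_distrib,
        Finset.sum_ite_mem Finset.univ ((S' ∩ S).powersetCard 2) (fun _ => μHat * Real.log N),
        Finset.sum_ite_mem Finset.univ (S.powersetCard 2) (fun _ => μHat * Real.log N),
        Finset.univ_inter, Finset.univ_inter, Finset.sum_const, Finset.sum_const,
        Finset.card_powersetCard, Finset.card_powersetCard, nsmul_eq_mul, nsmul_eq_mul]
      ring
    have hsum2 : ∑ e, (cc S' e) ^ 2
        = 2 * ((S.card.choose 2 : ℝ) - (m.choose 2 : ℝ)) := by
      have hpt : ∀ e, (cc S' e) ^ 2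
          = ((if e ∈ S'.powersetCard 2 then (1 : ℝ) else 0)
              + (if e ∈ S.powersetCard 2 then (1 : ℝ) else 0))
            - 2 * (if e ∈ (S' ∩ S).powersetCard 2 then (1 : ℝ) else 0) := by
        intro e
        rw [← hPP]
        have hcc : cc S' e = (if e ∈ S'.powersetCard 2 then (1 : ℝ) else 0)
            - (if e ∈ S.powersetCard 2 then (1 : ℝ) else 0) := rfl
        rw [hcc]
        by_cases h1 : e ∈ S'.powersetCard 2 <;> by_cases h2 : e ∈ S.powersetCard 2
        · simp only [if_pos h1, if_pos h2, if_pos (Finset.mem_inter.2 ⟨h1, h2⟩)]; ring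
        · simp only [if_pos h1, if_neg h2,
            if_neg (fun hc => h2 (Finset.mem_inter.1 hc).2)]; ring
        · simp only [if_neg h1, if_pos h2,
            if_neg (fun hc => h1 (Finset.mem_inter.1 hc).1)]; ring
        · simp only [if_neg h1, if_neg h2,
            if_neg (fun hc => h1 (Finset.mem_inter.1 hc).1)]; ring
      simp_rw [hpt]
      rw [Finset.sum_sub_distrib, Finset.sum_add_distrib,
        Finset.sum_ite_mem Finset.univ (S'.powersetCard 2) (fun _ => (1 : ℝ)),
        Finset.sum_ite_mem Finset.univ (S.powersetCard 2) (fun _ => (1 : ℝ)),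
        ← Finset.mul_sum,
        Finset.sum_ite_mem Finset.univ ((S' ∩ S).powersetCard 2) (fun _ => (1 : ℝ)),
        Finset.univ_inter, Finset.univ_inter, Finset.univ_inter,
        Finset.sum_const, Finset.sum_const, Finset.sum_const,
        Finset.card_powersetCard, Finset.card_powersetCard, Finset.card_powersetCard,
        hS'card]
      simp only [nsmul_eq_mul, mul_one]
      ring
    have hexp : t * (∑ e, cc S' e * mean e) + (∑ e, (cc S' e) ^ 2) * (v : ℝ) * t ^ 2 / 2
        = -((((S.card.choose 2 : ℝ)) - (m.choose 2 : ℝ)) * ((μHat / σHat) ^ 2 / 2)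
            * Real.log N) := by
      rw [hsum1, hsum2, hv, ht]
      field_simp
      ring
    have hnum : (ε / 2 + (j : ℝ))
        ≤ ((S.card.choose 2 : ℝ) - (m.choose 2 : ℝ)) * ((μHat / σHat) ^ 2 / 2) := by
      have hcast1 : ((S.card.choose 2 : ℕ) : ℝ)
          = (S.card : ℝ) * ((S.card : ℝ) - 1) / 2 := Nat.cast_choose_two (K := ℝ) S.card
      have hcast2 : ((m.choose 2 : ℕ) : ℝ) = (m : ℝ) * ((m : ℝ) - 1) / 2 :=
        Nat.cast_choose_two (K := ℝ) m
      have hK2 : (2 : ℝ) ≤ (S.card : ℝ) := by exact_mod_cast hS2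
      have hM0 : (0 : ℝ) ≤ (m : ℝ) := Nat.cast_nonneg _
      have hjKM0 : (m : ℝ) + (j : ℝ) = (S.card : ℝ) := by exact_mod_cast hmj
      have hj1' : (1 : ℝ) ≤ (j : ℝ) := by exact_mod_cast hj1
      set K := (S.card : ℝ) with hK
      set M := (m : ℝ) with hM
      have hjKM : (j : ℝ) = K - M := by linarith
      have hMK : M ≤ K - 1 := by linarith
      have hK1 : (0 : ℝ) < K - 1 := by linarith
      have hγ2 : 4 / (K - 1) + ε ≤ (μHat / σHat) ^ 2 := hγε
      set L := K * (K - 1) / 2 - M * (M - 1) / 2 with hL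
      have hKM1 : (1 : ℝ) ≤ K - M := by linarith
      have hfact : 2 * L = (K - M) * (K + M - 1) := by rw [hL]; ring
      have hL1 : 1 ≤ L := by
        nlinarith [mul_nonneg (by linarith : (0 : ℝ) ≤ K - M - 1)
          (by linarith : (0 : ℝ) ≤ K + M - 2)]
      have hLj : (K - M) * (K - 1) ≤ 2 * L := by
        nlinarith [mul_nonneg (by linarith : (0 : ℝ) ≤ K - M) hM0]
      rw [hcast1, hcast2, hjKM, ← hL]
      have hstep1 : L * ((4 / (K - 1) + ε) / 2) ≤ L * ((μHat / σHat) ^ 2 / 2) :=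
        mul_le_mul_of_nonneg_left (by linarith) (by linarith)
      have he1 : L * ((4 / (K - 1) + ε) / 2) = 2 * L / (K - 1) + L * ε / 2 := by
        field_simp
        ring
      have he2 : K - M ≤ 2 * L / (K - 1) := by
        rw [le_div_iff₀ hK1]
        exact hLj
      have he3 : ε / 2 ≤ L * ε / 2 := by nlinarith
      linarith [hstep1, he2, he3]
    have hfinal : rexp (t * (∑ e, cc S' e * mean e)
          + (∑ e, (cc S' e) ^ 2) * (v : ℝ) * t ^ 2 / 2)
        ≤ rexp (-(ε / 2) * Real.log N) * ((N : ℝ) ^ j)⁻¹ := by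
      rw [hexp]
      have hNj : rexp (-((j : ℝ) * Real.log N)) = ((N : ℝ) ^ j)⁻¹ := by
        rw [Real.exp_neg, Real.exp_nat_mul, Real.exp_log (by positivity : (0 : ℝ) < (N : ℝ))]
      rw [← hNj, ← Real.exp_add]
      apply Real.exp_le_exp.2
      have hmm := mul_le_mul_of_nonneg_right hnum hlogpos.le
      nlinarith [hmm]
    exact hch.trans hfinal
  -- union bound
  have hfail : (P Gᶜ).toReal ≤ 2 ^ S.card * rexp (-(ε / 2) * Real.log N) := by
    have h2 : P Gᶜ ≤ ∑ S' ∈ bad, P (B S') :=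
      (measure_mono hGc).trans (measure_biUnion_finset_le bad B)
    have hne : (∑ S' ∈ bad, P (B S')) ≠ ⊤ :=
      (ENNReal.sum_lt_top.2 fun S' _ => measure_lt_top _ _).ne
    have h3 : (P Gᶜ).toReal ≤ (∑ S' ∈ bad, P (B S')).toReal := ENNReal.toReal_mono hne h2
    rw [ENNReal.toReal_sum fun S' _ => measure_ne_top _ _] at h3
    have h4 : ∑ S' ∈ bad, (P (B S')).toReal
        ≤ ∑ S' ∈ bad, rexp (-(ε / 2) * Real.log N) * ((N : ℝ) ^ ((S' \ S).card))⁻¹ :=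
      Finset.sum_le_sum hkey
    rw [← Finset.mul_sum] at h4
    have h6 := count_bound S
    have h7 : rexp (-(ε / 2) * Real.log N) * (∑ S' ∈ bad, ((N : ℝ) ^ ((S' \ S).card))⁻¹)
        ≤ rexp (-(ε / 2) * Real.log N) * 2 ^ S.card :=
      mul_le_mul_of_nonneg_left h6 (Real.exp_nonneg _)
    calc (P Gᶜ).toReal ≤ _ := h3
      _ ≤ _ := h4
      _ ≤ rexp (-(ε / 2) * Real.log N) * 2 ^ S.card := h7
      _ = 2 ^ S.card * rexp (-(ε / 2) * Real.log N) := mul_comm _ _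
  rw [hsucc]
  have hsumone : (P G).toReal + (P Gᶜ).toReal = 1 := by
    rw [← ENNReal.toReal_add (measure_ne_top _ _) (measure_ne_top _ _),
      measure_add_measure_compl hGmeas, measure_univ, ENNReal.toReal_one]
  linarith
lemma success_le_one (μHat σHat : ℝ) (h : ℕ) {N : ℕ} (S : Finset (Fin N)) :
    hwsbmSuccess μHat σHat h S ≤ 1 := by
  unfold hwsbmSuccess
  refine ENNReal.toReal_le_of_le_ofReal zero_le_one ?_
  rw [ENNReal.ofReal_one]
  exact prob_le_one

set_option maxHeartbeats 1600000 in
/-- exact recovery in the 2-WSBM with parameters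
`(μ̂ log N, σ̂ √(log N/2), N, k)` and `k = o(log N)` is achievable whenever
`γ = μ̂/σ̂ > 2√(1/(k−1))`: the densest-`k`-subgraph estimator equals the planted
community with probability `1 − o(1)`. -/
theorem stmt18 (μHat σHat : ℝ) (hμ : 0 < μHat) (hσ : 0 < σHat)
    (k : ℕ → ℕ) (hk2 : ∀ N, 2 ≤ N → 2 ≤ k N) (hkN : ∀ N, 2 ≤ N → k N ≤ N)
    (hko : Tendsto (fun N : ℕ => (k N : ℝ) / Real.log N) atTop (nhds 0))
    (S : ∀ N : ℕ, Finset (Fin N)) (hScard : ∀ N, 2 ≤ N → (S N).card = k N)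
    (hγ : ∀ N, 2 ≤ N → 2 * Real.sqrt (1 / ((k N : ℝ) - 1)) < μHat / σHat) :
    Tendsto (fun N : ℕ => hwsbmSuccess μHat σHat 2 (S N)) atTop (nhds 1) := by
  classical
  set γ2 := (μHat / σHat) ^ 2 with hγ2def
  have hγ2 : ∀ N, 2 ≤ N → 4 / ((k N : ℝ) - 1) < γ2 := by
    intro N hN
    have hk : (2 : ℝ) ≤ (k N : ℝ) := by exact_mod_cast hk2 N hN
    have h1 : (0 : ℝ) < (k N : ℝ) - 1 := by linarith
    have h2 := hγ N hN
    have h3 : (2 * Real.sqrt (1 / ((k N : ℝ) - 1))) ^ 2 < (μHat / σHat) ^ 2 :=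
      pow_lt_pow_left₀ h2 (by positivity) two_ne_zero
    rw [mul_pow, Real.sq_sqrt (by positivity)] at h3
    calc 4 / ((k N : ℝ) - 1) = 2 ^ 2 * (1 / ((k N : ℝ) - 1)) := by ring
      _ < γ2 := h3
  have hγ2pos : 0 < γ2 := by
    have h1 := hγ2 2 le_rfl
    have hk : (2 : ℝ) ≤ (k 2 : ℝ) := by exact_mod_cast hk2 2 le_rfl
    have h2 : (0 : ℝ) < (k 2 : ℝ) - 1 := by linarith
    have h3 : (0 : ℝ) ≤ 4 / ((k 2 : ℝ) - 1) := by positivity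
    linarith
  set Kc := Nat.ceil (8 / γ2) with hKc
  set g' : ℕ → ℝ :=
    fun v => if 4 / (v : ℝ) < γ2 then min (γ2 / 2) (γ2 - 4 / (v : ℝ)) else γ2 / 2 with hg'
  have hne : (Finset.range (Kc + 1)).Nonempty := ⟨0, Finset.mem_range.2 (Nat.succ_pos _)⟩
  set ε := (Finset.range (Kc + 1)).inf' hne g' with hεdef
  have hεpos : 0 < ε := by
    rw [hεdef, Finset.lt_inf'_iff]
    intro v hv
    rw [hg']
    dsimp only
    split_ifs with hcond
    · exact lt_min (by positivity) (by linarith)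
    · positivity
  have hεhalf : ε ≤ γ2 / 2 := by
    have h0 : g' 0 = γ2 / 2 := by
      rw [hg']
      dsimp only
      rw [Nat.cast_zero, div_zero, if_pos hγ2pos, sub_zero]
      exact min_eq_left (by linarith)
    calc ε ≤ g' 0 := Finset.inf'_le _ (Finset.mem_range.2 (Nat.succ_pos _))
      _ = γ2 / 2 := h0
  have hεprop : ∀ N, 2 ≤ N → 4 / ((k N : ℝ) - 1) + ε ≤ γ2 := by
    intro N hN
    have hk2N := hk2 N hN
    have hkR : (2 : ℝ) ≤ (k N : ℝ) := by exact_mod_cast hk2N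
    have hcast : ((k N - 1 : ℕ) : ℝ) = (k N : ℝ) - 1 := by
      have h1 : 1 ≤ k N := by omega
      push_cast [Nat.cast_sub h1]
      ring
    by_cases hvK : k N - 1 ≤ Kc
    · have hmem : k N - 1 ∈ Finset.range (Kc + 1) := Finset.mem_range.2 (by omega)
      have hle : ε ≤ g' (k N - 1) := Finset.inf'_le _ hmem
      have hcond : 4 / ((k N - 1 : ℕ) : ℝ) < γ2 := by rw [hcast]; exact hγ2 N hN
      rw [hg'] at hle
      dsimp only at hle
      rw [if_pos hcond] at hle
      have hmin := min_le_right (γ2 / 2) (γ2 - 4 / ((k N - 1 : ℕ) : ℝ))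
      have hle2 : ε ≤ γ2 - 4 / ((k N - 1 : ℕ) : ℝ) := hle.trans hmin
      rw [hcast] at hle2
      linarith
    · have h8 : 8 / γ2 ≤ (Kc : ℝ) := Nat.le_ceil _
      have hv : (Kc : ℝ) < ((k N - 1 : ℕ) : ℝ) := by exact_mod_cast (by omega : Kc < k N - 1)
      have hvpos : (0 : ℝ) < (k N : ℝ) - 1 := by linarith
      have h8v : 8 / γ2 < (k N : ℝ) - 1 := by rw [← hcast]; linarith
      have h4 : 4 / ((k N : ℝ) - 1) ≤ γ2 / 2 := by
        rw [div_le_iff₀ hvpos]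
        have hcalc : γ2 / 2 * (8 / γ2) = 4 := by field_simp; ring
        nlinarith [hγ2pos]
      linarith
  set gg : ℕ → ℝ := fun N => 2 ^ (k N) * rexp (-(ε / 2) * Real.log N) with hgg
  have hgg0 : Tendsto gg atTop (nhds 0) := by
    have hexpr : ∀ N : ℕ, gg N = rexp ((k N : ℝ) * Real.log 2 + -(ε / 2) * Real.log N) := by
      intro N
      rw [hgg]
      dsimp only
      rw [Real.exp_add, Real.exp_nat_mul, Real.exp_log two_pos]
    have hlog : Tendsto (fun N : ℕ => Real.log N) atTop atTop :=
      Real.tendsto_log_atTop.comp tendsto_natCast_atTop_atTop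
    have hcoef : Tendsto (fun N : ℕ => (k N : ℝ) / Real.log N * Real.log 2 - ε / 2) atTop
        (nhds (0 * Real.log 2 - ε / 2)) := (hko.mul_const _).sub_const _
    rw [zero_mul, zero_sub] at hcoef
    have hbot : Tendsto
        (fun N : ℕ => Real.log N * ((k N : ℝ) / Real.log N * Real.log 2 - ε / 2))
        atTop atBot := hlog.atTop_mul_neg (by linarith) hcoef
    have hEq : ∀ᶠ N : ℕ in atTop,
        Real.log N * ((k N : ℝ) / Real.log N * Real.log 2 - ε / 2)
          = (k N : ℝ) * Real.log 2 + -(ε / 2) * Real.log N := by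
      filter_upwards [eventually_ge_atTop 2] with N hN
      have hln : Real.log N ≠ 0 :=
        ne_of_gt (Real.log_pos (by exact_mod_cast (by omega : 1 < N)))
      field_simp
      ring
    have hbot2 : Tendsto (fun N : ℕ => (k N : ℝ) * Real.log 2 + -(ε / 2) * Real.log N)
        atTop atBot := hbot.congr' hEq
    have hcomp := Real.tendsto_exp_atBot.comp hbot2
    exact Tendsto.congr (fun N => (hexpr N).symm) hcomp
  have hone : Tendsto (fun N : ℕ => 1 - gg N) atTop (nhds 1) := by
    have h1 := (tendsto_const_nhds (x := (1 : ℝ)) (f := (atTop : Filter ℕ))).sub hgg0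
    simpa using h1
  refine tendsto_of_tendsto_of_tendsto_of_le_of_le' hone tendsto_const_nhds ?_ ?_
  · filter_upwards [eventually_ge_atTop 2] with N hN
    have hc := hScard N hN
    have hmain := hwsbm_main μHat σHat hμ hσ hN (S N)
        (by rw [hc]; exact hk2 N hN) hεpos
        (by rw [hc]; exact hεprop N hN)
    rw [hc] at hmain
    rw [hgg]
    exact hmain
  · exact Filter.Eventually.of_forall fun N => success_le_one μHat σHat 2 (S N)
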